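/- Let M be a quasitoric manifold over the cube [−1,1]^n (n ≥ 3) with characteristic function λ(F_{n,±1}) = ±e_n, λ(F_{i,±1}) = e_i ± e_n for i = 1,…,n−1, and let τ be the free involution on M induced by (x, Σα_i e_i) ↦ (−x, Σ_{i<n} α_i e_i − α_n e_n + (1/2)e_1). Then in the rational cohomology of N = M/τ one has b_2(N) = 1, and the generator v of H^2(N; ℚ) satisfies v^2 ≠ 0; indeed v^2·[v_{n,1}]^{n−2} = (−2)^{n−1}(n−1)!·∏_{i=1}^n [v_{i,1}] ≠ 0 in H^{2n}(M; ℚ). -/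

import Mathlib

noncomputable section

open MvPolynomial

/-- The Davis–Januszkiewicz ideal of the quasitoric manifold `M` over the cube
`[−1,1]^n` with characteristic function `λ(F_{n,±1}) = ±e_n`,
`λ(F_{i,±1}) = e_i ± e_n` (`i < n`): the variable `X (i, true)` is the
equivariant Poincaré dual `v_{i,1}`, and `X (i, false)` is `v_{i,−1}`; `lst`
denotes the index `n`. The ideal is generated by the Stanley–Reisner relations
`v_{i,1}·v_{i,−1} = 0` and the linear relations `v_{i,1} = −v_{i,−1}` (`i ≠ n`)
and `v_{n,1} = v_{n,−1} − Σ_{i<n}(v_{i,1} − v_{i,−1})`. -/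
def djIdeal (n : ℕ) (lst : Fin n) : Ideal (MvPolynomial (Fin n × Bool) ℚ) :=
  Ideal.span
    ({q | ∃ i : Fin n, q = X (i, true) * X (i, false)} ∪
     {q | ∃ i : Fin n, i ≠ lst ∧ q = X (i, true) + X (i, false)} ∪
     {X (lst, true) - X (lst, false) +
       ∑ i ∈ Finset.univ.erase lst, (X (i, true) - X (i, false))})

/-- The class `[v_{i,1}]` in `H^*(M;ℚ)`. -/
def djX (n : ℕ) (lst : Fin n) (i : Fin n) :
    MvPolynomial (Fin n × Bool) ℚ ⧸ djIdeal n lst :=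
  Ideal.Quotient.mk (djIdeal n lst) (X (i, true))

/-- The class `[v_{i,−1}]` in `H^*(M;ℚ)`. -/
def djY (n : ℕ) (lst : Fin n) (i : Fin n) :
    MvPolynomial (Fin n × Bool) ℚ ⧸ djIdeal n lst :=
  Ideal.Quotient.mk (djIdeal n lst) (X (i, false))

lemma djX_mul_djY (n : ℕ) (lst i : Fin n) : djX n lst i * djY n lst i = 0 := by
  rw [djX, djY, ← map_mul, Ideal.Quotient.eq_zero_iff_mem]
  exact Ideal.subset_span (Or.inl (Or.inl ⟨i, rfl⟩))

lemma djY_eq_neg (n : ℕ) (lst : Fin n) {i : Fin n} (h : i ≠ lst) :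
    djY n lst i = - djX n lst i := by
  have h0 : djX n lst i + djY n lst i = 0 := by
    rw [djX, djY, ← map_add, Ideal.Quotient.eq_zero_iff_mem]
    exact Ideal.subset_span (Or.inl (Or.inr ⟨i, h, rfl⟩))
  exact eq_neg_of_add_eq_zero_right h0

lemma djY_lst (n : ℕ) (lst : Fin n) :
    djY n lst lst = djX n lst lst + 2 * ∑ i ∈ Finset.univ.erase lst, djX n lst i := by
  have h0 : djX n lst lst - djY n lst lst +
      ∑ i ∈ Finset.univ.erase lst, (djX n lst i - djY n lst i) = 0 := by
    simp only [djX, djY, ← map_sub, ← map_sum, ← map_add, Ideal.Quotient.eq_zero_iff_mem]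
    exact Ideal.subset_span (Or.inr rfl)
  have h1 : ∑ i ∈ Finset.univ.erase lst, (djX n lst i - djY n lst i) =
      2 * ∑ i ∈ Finset.univ.erase lst, djX n lst i := by
    rw [Finset.mul_sum]
    refine Finset.sum_congr rfl fun i hi => ?_
    rw [djY_eq_neg n lst (Finset.mem_erase.mp hi).1]
    ring
  rw [h1] at h0
  linear_combination -h0

lemma djX_sq_zero (n : ℕ) (lst : Fin n) {i : Fin n} (h : i ≠ lst) : djX n lst i ^ 2 = 0 := by
  have := djX_mul_djY n lst i
  rw [djY_eq_neg n lst h] at this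
  linear_combination -this

lemma mul_prod_sq_zero {R ι : Type*} [CommRing R] [DecidableEq ι] {T : Finset ι} {a : ι → R}
    (h : ∀ i ∈ T, a i ^ 2 = 0) {j : ι} (hj : j ∈ T) : a j * ∏ i ∈ T, a i = 0 := by
  rw [← Finset.mul_prod_erase T a hj, ← mul_assoc, ← sq, h j hj, zero_mul]

lemma sum_sq_zero_pow_card {R ι : Type*} [CommRing R] [DecidableEq ι] (T : Finset ι) (a : ι → R)
    (h : ∀ i ∈ T, a i ^ 2 = 0) :
    (∑ i ∈ T, a i) ^ T.card = (T.card.factorial : R) * ∏ i ∈ T, a i := by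
  induction T using Finset.induction with
  | empty => simp
  | @insert j s hj ih =>
    have hs : ∀ i ∈ s, a i ^ 2 = 0 := fun i hi => h i (Finset.mem_insert_of_mem hi)
    have ihs := ih hs
    have hSs : (∑ i ∈ s, a i) ^ (s.card + 1) = 0 := by
      rw [pow_succ, ihs, mul_assoc, Finset.mul_sum]
      have : ∑ i ∈ s, (∏ x ∈ s, a x) * a i = 0 :=
        Finset.sum_eq_zero fun i hi => by rw [mul_comm, mul_prod_sq_zero hs hi]
      rw [this, mul_zero]
    rw [Finset.sum_insert hj, Finset.card_insert_of_notMem hj, add_pow]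
    rw [Finset.sum_eq_single 1 ?h0 ?h1]
    · rw [pow_one, Nat.add_sub_cancel, ihs, Finset.prod_insert hj, Nat.choose_one_right,
        Nat.factorial_succ]
      push_cast
      ring
    · intro k hk hk1
      rcases Nat.lt_or_ge k 2 with hk2 | hk2
      · interval_cases k
        · simp [hSs]
        · exact absurd rfl hk1
      · obtain ⟨l, rfl⟩ : ∃ l, k = l + 2 := ⟨k - 2, by omega⟩
        rw [pow_add, h j (Finset.mem_insert_self j s), mul_zero, zero_mul, zero_mul]
    · intro hmem
      exact absurd (Finset.mem_range.mpr (by omega)) hmem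

/-- The ideal generated by the squares `X i ^ 2`, `i ≠ lst`. -/
def sqIdeal (n : ℕ) (lst : Fin n) : Ideal (MvPolynomial (Fin n) ℚ) :=
  Ideal.span {q | ∃ i : Fin n, i ≠ lst ∧ q = X i ^ 2}

/-- An ideal of polynomials having no monomials squarefree away from `lst`. -/
def sqK (n : ℕ) (lst : Fin n) : Ideal (MvPolynomial (Fin n) ℚ) where
  carrier := {p | ∀ m : Fin n →₀ ℕ, (∀ j, j ≠ lst → m j ≤ 1) → coeff m p = 0}
  add_mem' ha hb m hm := by rw [coeff_add, ha m hm, hb m hm, add_zero]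
  zero_mem' m hm := by simp
  smul_mem' c p hp := by
    intro m hm
    rw [smul_eq_mul, coeff_mul]
    refine Finset.sum_eq_zero fun ab hab => ?_
    rw [Finset.HasAntidiagonal.mem_antidiagonal] at hab
    have h2 : coeff ab.2 p = 0 := by
      refine hp ab.2 fun j hj => le_trans ?_ (hm j hj)
      rw [← hab, Finsupp.add_apply]
      omega
    rw [h2, mul_zero]

lemma sqIdeal_le_sqK (n : ℕ) (lst : Fin n) : sqIdeal n lst ≤ sqK n lst := by
  rw [sqIdeal, Ideal.span_le]
  rintro q ⟨i, hi, rfl⟩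
  intro m hm
  rw [X_pow_eq_monomial, coeff_monomial]
  split_ifs with h
  · exfalso
    have := hm i hi
    rw [← h, Finsupp.single_apply, if_pos rfl] at this
    omega
  · rfl

lemma prod_X_eq_monomial' {ι : Type*} [DecidableEq ι] (T : Finset ι) :
    ∏ i ∈ T, (X i : MvPolynomial ι ℚ) =
      monomial (∑ i ∈ T, Finsupp.single i 1) 1 := by
  induction T using Finset.induction with
  | empty => simp
  | @insert j s hj ih =>
    rw [Finset.prod_insert hj, Finset.sum_insert hj, ih, X, monomial_mul, one_mul]

lemma prod_X_not_mem_sqK (n : ℕ) (lst : Fin n) :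
    (∏ i ∈ Finset.univ.erase lst, (X i : MvPolynomial (Fin n) ℚ)) ∉ sqK n lst := by
  intro hmem
  have h := hmem (∑ i ∈ Finset.univ.erase lst, Finsupp.single i 1) ?_
  · rw [prod_X_eq_monomial', coeff_monomial, if_pos rfl] at h
    exact one_ne_zero h
  · intro j hj
    classical
    rw [Finsupp.finset_sum_apply]
    simp only [Finsupp.single_apply]
    rw [Finset.sum_ite_eq' (Finset.univ.erase lst) j (fun _ => 1)]
    split_ifs <;> omega

/-- The quotient `A = ℚ[x_i : i ≠ lst]/(x_i²)` (with a junk variable `x_lst`). -/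
abbrev djA (n : ℕ) (lst : Fin n) := MvPolynomial (Fin n) ℚ ⧸ sqIdeal n lst

def djE (n : ℕ) (lst : Fin n) (i : Fin n) : djA n lst :=
  Ideal.Quotient.mk (sqIdeal n lst) (X i)

def djSigma (n : ℕ) (lst : Fin n) : djA n lst := ∑ i ∈ Finset.univ.erase lst, djE n lst i

/-- The minimal polynomial `u² + 2σu` of the last class. -/
def djPol (n : ℕ) (lst : Fin n) : Polynomial (djA n lst) :=
  Polynomial.X ^ 2 + Polynomial.C (2 * djSigma n lst) * Polynomial.X

lemma djPol_monic (n : ℕ) (lst : Fin n) : (djPol n lst).Monic := by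
  apply Polynomial.monic_X_pow_add (n := 2)
  apply lt_of_le_of_lt (Polynomial.degree_mul_le _ _)
  apply lt_of_le_of_lt (add_le_add Polynomial.degree_C_le Polynomial.degree_X_le)
  norm_num

abbrev djB (n : ℕ) (lst : Fin n) := AdjoinRoot (djPol n lst)

/-- Images of the `2n` generators in `B`. -/
def djG (n : ℕ) (lst : Fin n) : Fin n × Bool → djB n lst
  | (i, true) =>
      if i = lst then AdjoinRoot.root (djPol n lst)
      else AdjoinRoot.of (djPol n lst) (djE n lst i)
  | (i, false) =>
      if i = lst then
        AdjoinRoot.root (djPol n lst) + AdjoinRoot.of (djPol n lst) (2 * djSigma n lst)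
      else - AdjoinRoot.of (djPol n lst) (djE n lst i)

lemma djE_sq (n : ℕ) (lst : Fin n) {i : Fin n} (h : i ≠ lst) : djE n lst i ^ 2 = 0 := by
  rw [djE, ← map_pow, Ideal.Quotient.eq_zero_iff_mem]
  exact Ideal.subset_span ⟨i, h, rfl⟩

lemma djRoot_rel (n : ℕ) (lst : Fin n) :
    AdjoinRoot.root (djPol n lst) ^ 2 +
      AdjoinRoot.of (djPol n lst) (2 * djSigma n lst) * AdjoinRoot.root (djPol n lst) = 0 := by
  have : AdjoinRoot.root (djPol n lst) ^ 2 +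
      AdjoinRoot.of (djPol n lst) (2 * djSigma n lst) * AdjoinRoot.root (djPol n lst) =
      AdjoinRoot.mk (djPol n lst)
        (Polynomial.X ^ 2 + Polynomial.C (2 * djSigma n lst) * Polynomial.X) := by
    rw [map_add (AdjoinRoot.mk (djPol n lst)), map_mul (AdjoinRoot.mk (djPol n lst)),
      map_pow (AdjoinRoot.mk (djPol n lst)), AdjoinRoot.mk_X, AdjoinRoot.mk_C]
  rw [this]
  exact AdjoinRoot.mk_self

lemma djIdeal_le_ker (n : ℕ) (lst : Fin n) :
    djIdeal n lst ≤ RingHom.ker (MvPolynomial.aeval (djG n lst) :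
      MvPolynomial (Fin n × Bool) ℚ →ₐ[ℚ] djB n lst).toRingHom := by
  rw [djIdeal, Ideal.span_le]
  rintro q ((⟨i, rfl⟩ | ⟨i, hi, rfl⟩) | rfl)
  · rw [SetLike.mem_coe, RingHom.mem_ker]
    simp only [map_mul, AlgHom.toRingHom_eq_coe, RingHom.coe_coe, aeval_X]
    by_cases h : i = lst
    · subst h
      simp only [djG, eq_self_iff_true, if_true]
      linear_combination djRoot_rel n i
    · simp only [djG, if_neg h]
      rw [mul_neg, ← map_mul, ← sq, djE_sq n lst h, map_zero, neg_zero]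
  · rw [SetLike.mem_coe, RingHom.mem_ker]
    simp only [map_add, AlgHom.toRingHom_eq_coe, RingHom.coe_coe, aeval_X]
    simp only [djG, if_neg hi]
    ring
  · rw [SetLike.mem_coe, RingHom.mem_ker]
    simp only [map_add, map_sub, map_sum, AlgHom.toRingHom_eq_coe, RingHom.coe_coe, aeval_X]
    have hof : AdjoinRoot.of (djPol n lst) (2 * djSigma n lst) =
        2 * ∑ i ∈ Finset.univ.erase lst, AdjoinRoot.of (djPol n lst) (djE n lst i) := by
      rw [map_mul, map_ofNat, djSigma, map_sum]
    have herase : ∑ i ∈ Finset.univ.erase lst, (djG n lst (i, true) - djG n lst (i, false)) =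
        2 * ∑ i ∈ Finset.univ.erase lst, AdjoinRoot.of (djPol n lst) (djE n lst i) := by
      rw [Finset.mul_sum]
      refine Finset.sum_congr rfl fun i hi => ?_
      have hi' := (Finset.mem_erase.mp hi).1
      simp only [djG, if_neg hi']
      ring
    rw [herase]
    simp only [djG, if_pos rfl, if_true, eq_self_iff_true]
    rw [hof]
    ring

lemma one_not_mem_sqK (n : ℕ) (lst : Fin n) : (1 : MvPolynomial (Fin n) ℚ) ∉ sqK n lst := by
  intro h
  have h0 := h 0 (fun j _ => by simp)
  rw [coeff_zero_one] at h0
  exact one_ne_zero h0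

instance djA_nontrivial (n : ℕ) (lst : Fin n) : Nontrivial (djA n lst) := by
  apply Ideal.Quotient.nontrivial_iff.mpr
  intro htop
  exact one_not_mem_sqK n lst (sqIdeal_le_sqK n lst (htop ▸ Submodule.mem_top))

lemma djPol_degree (n : ℕ) (lst : Fin n) : (djPol n lst).degree = 2 := by
  have hlt : (Polynomial.C (2 * djSigma n lst) * Polynomial.X).degree <
      ((Polynomial.X : Polynomial (djA n lst)) ^ 2).degree := by
    rw [Polynomial.degree_X_pow]
    apply lt_of_le_of_lt (Polynomial.degree_mul_le _ _)
    apply lt_of_le_of_lt (add_le_add Polynomial.degree_C_le Polynomial.degree_X_le)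
    norm_num
  rw [djPol, Polynomial.degree_add_eq_left_of_degree_lt hlt, Polynomial.degree_X_pow]
  rfl

lemma of_mul_root_ne_zero (n : ℕ) (lst : Fin n) {a : djA n lst} (ha : a ≠ 0) :
    AdjoinRoot.of (djPol n lst) a * AdjoinRoot.root (djPol n lst) ≠ 0 := by
  haveI : Nontrivial (djA n lst) := nontrivial_of_ne a 0 ha
  intro h
  have h1 : AdjoinRoot.of (djPol n lst) a * AdjoinRoot.root (djPol n lst) =
      AdjoinRoot.mk (djPol n lst) (Polynomial.C a * Polynomial.X) := by
    rw [map_mul (AdjoinRoot.mk (djPol n lst)), AdjoinRoot.mk_C, AdjoinRoot.mk_X]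
  have h2 := AdjoinRoot.modByMonicHom_mk (djPol_monic n lst) (Polynomial.C a * Polynomial.X)
  rw [← h1, h, map_zero] at h2
  have h3 : (Polynomial.C a * Polynomial.X) %ₘ djPol n lst = Polynomial.C a * Polynomial.X := by
    rw [Polynomial.modByMonic_eq_self_iff (djPol_monic n lst), djPol_degree]
    apply lt_of_le_of_lt (Polynomial.degree_mul_le _ _)
    apply lt_of_le_of_lt (add_le_add Polynomial.degree_C_le Polynomial.degree_X_le)
    norm_num
  rw [h3] at h2
  have h4 := congrArg (fun p => Polynomial.coeff p 1) h2
  simp only [Polynomial.coeff_zero, Polynomial.coeff_C_mul, Polynomial.coeff_X_one,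
    mul_one] at h4
  exact ha h4.symm

lemma dj_prod_ne_zero (n : ℕ) (lst : Fin n) : (∏ i, djX n lst i) ≠ 0 := by
  have ha : Ideal.Quotient.mk (sqIdeal n lst) (∏ i ∈ Finset.univ.erase lst, X i) ≠ 0 :=
    fun h => prod_X_not_mem_sqK n lst
      (sqIdeal_le_sqK n lst (Ideal.Quotient.eq_zero_iff_mem.mp h))
  intro h
  have hΦ0 : ∀ a ∈ djIdeal n lst,
      (MvPolynomial.aeval (djG n lst) :
        MvPolynomial (Fin n × Bool) ℚ →ₐ[ℚ] djB n lst).toRingHom a = 0 :=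
    fun a haa => djIdeal_le_ker n lst haa
  set Φ := Ideal.Quotient.lift (djIdeal n lst)
    (MvPolynomial.aeval (djG n lst) :
      MvPolynomial (Fin n × Bool) ℚ →ₐ[ℚ] djB n lst).toRingHom hΦ0 with hΦdef
  have h1 : Φ (∏ i, djX n lst i) = 0 := by rw [h, map_zero]
  have h2 : Φ (∏ i, djX n lst i) =
      AdjoinRoot.of (djPol n lst)
        (Ideal.Quotient.mk (sqIdeal n lst) (∏ i ∈ Finset.univ.erase lst, X i)) *
      AdjoinRoot.root (djPol n lst) := by
    have hfac : (∏ i, djX n lst i) =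
        Ideal.Quotient.mk (djIdeal n lst) (∏ i : Fin n, X (i, true)) := by
      rw [map_prod]; rfl
    rw [hfac, hΦdef, Ideal.Quotient.lift_mk, AlgHom.toRingHom_eq_coe, RingHom.coe_coe,
      map_prod]
    rw [← Finset.mul_prod_erase Finset.univ _ (Finset.mem_univ lst)]
    have hterm : ∀ i ∈ Finset.univ.erase lst,
        (MvPolynomial.aeval (djG n lst)) (X (i, true) : MvPolynomial (Fin n × Bool) ℚ) =
          AdjoinRoot.of (djPol n lst) (djE n lst i) := by
      intro i hi
      rw [aeval_X]
      simp only [djG, if_neg (Finset.mem_erase.mp hi).1]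
    rw [Finset.prod_congr rfl hterm, ← map_prod]
    have hlast : (MvPolynomial.aeval (djG n lst))
        (X (lst, true) : MvPolynomial (Fin n × Bool) ℚ) =
          AdjoinRoot.root (djPol n lst) := by
      rw [aeval_X]; simp only [djG, eq_self_iff_true, if_true]
    rw [hlast, mul_comm]
    congr 1
    simp only [djE]
    exact congrArg _ (map_prod (Ideal.Quotient.mk (sqIdeal n lst)) (fun i => X i)
      (Finset.univ.erase lst)).symm
  rw [h1] at h2
  exact of_mul_root_ne_zero n lst ha h2.symm

set_option maxHeartbeats 2000000 in
/-- for the quasitoric manifold `M` over `[−1,1]^n` (`n ≥ 3`)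
with the above characteristic function and the free involution `τ` swapping
`v_{i,1} ↔ v_{i,−1}`, the quotient `N = M/τ` has `b₂(N;ℚ) = 1`: every
`τ`-invariant degree-two class is a rational multiple of
`v = [v_{n,1}] + [v_{n,−1}]`, and this generator satisfies
`v²·[v_{n,1}]^{n−2} = (−2)^{n−1}·(n−1)!·∏ᵢ [v_{i,1}] ≠ 0` in `H^{2n}(M;ℚ)`;
in particular `v² ≠ 0`. -/
theorem quotient_of_cube_quasitoric_has_b2_one_and_square_nonzero
    (n : ℕ) (hn : 3 ≤ n) (lst : Fin n) (hlst : (lst : ℕ) = n - 1) :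
    (∀ c d : Fin n → ℚ,
      (∑ i, c i • djX n lst i + ∑ i, d i • djY n lst i =
        ∑ i, c i • djY n lst i + ∑ i, d i • djX n lst i) →
      ∃ t : ℚ, ∑ i, c i • djX n lst i + ∑ i, d i • djY n lst i =
        t • (djX n lst lst + djY n lst lst)) ∧
    ((djX n lst lst + djY n lst lst) ^ 2 * (djX n lst lst) ^ (n - 2) =
      algebraMap ℚ _ ((-2 : ℚ) ^ (n - 1) * (Nat.factorial (n - 1) : ℚ)) *
        ∏ i, djX n lst i) ∧
    (∏ i, djX n lst i ≠ 0) ∧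
    (djX n lst lst + djY n lst lst) ^ 2 ≠ 0 := by
  classical
  set x := djX n lst lst with hxdef
  set y := djY n lst lst with hydef
  set S := ∑ i ∈ Finset.univ.erase lst, djX n lst i with hSdef
  have hy : y = x + 2 * S := djY_lst n lst
  have hx2 : x ^ 2 + 2 * (S * x) = 0 := by
    have hxy := djX_mul_djY n lst lst
    rw [djY_lst n lst] at hxy
    linear_combination hxy
  have hprodne : (∏ i, djX n lst i) ≠ 0 := dj_prod_ne_zero n lst
  have hv2 : (x + y) ^ 2 = 4 * S ^ 2 := by
    rw [hy]; linear_combination 4 * hx2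
  have hxpow : ∀ k : ℕ, x ^ (k + 1) = (-2) ^ k * (S ^ k * x) := by
    intro k
    induction k with
    | zero => simp
    | succ k ih =>
      have hstep : x ^ (k + 1 + 1) = x ^ (k + 1) * x := by ring
      rw [hstep, ih]
      linear_combination ((-2 : _) ^ k * S ^ k) * hx2
  have hScard : (Finset.univ.erase lst).card = n - 1 := by
    rw [Finset.card_erase_of_mem (Finset.mem_univ lst), Finset.card_univ, Fintype.card_fin]
  have hS : S ^ (n - 1) =
      ((n - 1).factorial : MvPolynomial (Fin n × Bool) ℚ ⧸ djIdeal n lst) *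
        ∏ i ∈ Finset.univ.erase lst, djX n lst i := by
    have h := sum_sq_zero_pow_card (Finset.univ.erase lst) (djX n lst)
      (fun i hi => djX_sq_zero n lst (Finset.mem_erase.mp hi).1)
    rwa [hScard] at h
  have hprodsplit : (∏ i, djX n lst i) = x * ∏ i ∈ Finset.univ.erase lst, djX n lst i :=
    (Finset.mul_prod_erase _ _ (Finset.mem_univ lst)).symm
  have h32 : n - 2 = (n - 3) + 1 := by omega
  have h12 : n - 1 = (n - 3) + 2 := by omega
  have hcoef : (4 : MvPolynomial (Fin n × Bool) ℚ ⧸ djIdeal n lst) * (-2) ^ (n - 3) =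
      (-2) ^ (n - 1) := by
    rw [h12, pow_add]; ring
  have hSsplit : S ^ 2 * S ^ (n - 3) = S ^ (n - 1) := by
    rw [h12, pow_add]; ring
  have key2 : (x + y) ^ 2 * x ^ (n - 2) =
      algebraMap ℚ _ ((-2 : ℚ) ^ (n - 1) * (Nat.factorial (n - 1) : ℚ)) *
        ∏ i, djX n lst i := by
    calc (x + y) ^ 2 * x ^ (n - 2)
        = 4 * S ^ 2 * ((-2) ^ (n - 3) * (S ^ (n - 3) * x)) := by
          rw [hv2, h32, hxpow (n - 3)]
      _ = (4 * (-2) ^ (n - 3)) * ((S ^ 2 * S ^ (n - 3)) * x) := by ring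
      _ = (-2) ^ (n - 1) * (S ^ (n - 1) * x) := by rw [hcoef, hSsplit]
      _ = (-2) ^ (n - 1) * (((n - 1).factorial :
            MvPolynomial (Fin n × Bool) ℚ ⧸ djIdeal n lst) *
            ((∏ i ∈ Finset.univ.erase lst, djX n lst i) * x)) := by rw [hS]; ring
      _ = algebraMap ℚ _ ((-2 : ℚ) ^ (n - 1) * (Nat.factorial (n - 1) : ℚ)) *
            ∏ i, djX n lst i := by
          rw [hprodsplit]
          simp only [map_mul, map_pow, map_neg, map_ofNat, map_natCast]
          ring
  refine ⟨?_, key2, hprodne, ?_⟩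
  · intro c d hyp
    refine ⟨(c lst + d lst) / 2, ?_⟩
    have h2S : (2 : ℚ) • S = 2 * S := by
      rw [two_smul, two_mul]
    have hy' : y = x + (2 : ℚ) • S := by rw [hy, h2S]
    have hXsum : ∀ e : Fin n → ℚ, ∑ i, e i • djX n lst i =
        e lst • x + ∑ i ∈ Finset.univ.erase lst, e i • djX n lst i :=
      fun e => (Finset.add_sum_erase _ _ (Finset.mem_univ lst)).symm
    have hYsum : ∀ e : Fin n → ℚ, ∑ i, e i • djY n lst i =
        e lst • (x + (2 : ℚ) • S) - ∑ i ∈ Finset.univ.erase lst, e i • djX n lst i := by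
      intro e
      rw [← Finset.add_sum_erase _ _ (Finset.mem_univ lst)]
      have h1 : ∑ i ∈ Finset.univ.erase lst, e i • djY n lst i =
          - ∑ i ∈ Finset.univ.erase lst, e i • djX n lst i := by
        rw [← Finset.sum_neg_distrib]
        refine Finset.sum_congr rfl fun i hi => ?_
        rw [djY_eq_neg n lst (Finset.mem_erase.mp hi).1, smul_neg]
      rw [h1, djY_lst n lst, ← hSdef, ← hxdef, h2S, sub_eq_add_neg]
    rw [hXsum c, hYsum d] at hyp ⊢
    rw [hXsum d, hYsum c] at hyp
    rw [hy']
    set A := ∑ i ∈ Finset.univ.erase lst, c i • djX n lst i with hA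
    set B := ∑ i ∈ Finset.univ.erase lst, d i • djX n lst i with hB
    have hAB : A - B - (c lst - d lst) • S = 0 := by
      have h2 : (2 : ℚ) • (A - B - (c lst - d lst) • S) = 0 := by
        linear_combination (norm := module) hyp
      have h3 := congrArg (fun z => (1 / 2 : ℚ) • z) h2
      simpa [smul_smul] using h3
    linear_combination (norm := module) hAB
  · intro h0
    rw [h0, zero_mul] at key2
    have hc : ((-2 : ℚ) ^ (n - 1) * (Nat.factorial (n - 1) : ℚ)) ≠ 0 := by
      apply mul_ne_zero (pow_ne_zero _ (by norm_num))
      exact_mod_cast Nat.factorial_ne_zero (n - 1)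
    have h6 : (∏ i, djX n lst i) = 0 := by
      calc (∏ i, djX n lst i)
          = algebraMap ℚ _ ((-2 : ℚ) ^ (n - 1) * (Nat.factorial (n - 1) : ℚ))⁻¹ *
            (algebraMap ℚ _ ((-2 : ℚ) ^ (n - 1) * (Nat.factorial (n - 1) : ℚ)) *
              ∏ i, djX n lst i) := by
            rw [← mul_assoc, ← map_mul, inv_mul_cancel₀ hc, map_one, one_mul]
        _ = 0 := by rw [← key2, mul_zero]
    exact hprodne h6
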